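/- The BS(LRA) clause set consisting of the five Nat-defining clauses together with {x = a → Nat(x)}, {P(0)}, {y = x+1 → (P(x) → P(y))}, {x = a → ¬P(x)} is unsatisfiable over hierarchic (standard ℚ) models, yet every finite subset of its set of ground instances is satisfiable (non-compactness of almost pure BS(LRA)). -/
import Mathlib

lemma natA_is_nat (NatA : Set ℚ)
    (h0 : (0:ℚ) ∈ NatA)
    (h2 : ∀ q : ℚ, q < 0 → q ∉ NatA)
    (h3 : ∀ q : ℚ, 0 < q → q < 1 → q ∉ NatA)
    (h4 : ∀ q : ℚ, 0 < q → q + 1 ∈ NatA → q ∈ NatA) :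
    ∀ n : ℕ, ∀ q ∈ NatA, q ≤ n → ∃ m : ℕ, q = m := by
  intro n
  induction n with
  | zero =>
    intro q hq hle
    rcases lt_trichotomy q 0 with h | h | h
    · exact absurd hq (h2 q h)
    · exact ⟨0, by simpa using h⟩
    · exact absurd hle (by exact_mod_cast not_le.mpr h)
  | succ n ih =>
    intro q hq hle
    by_cases hqn : q ≤ n
    · exact ih q hq hqn
    push_neg at hqn
    have hq1 : 1 ≤ q := by
      rcases lt_trichotomy q 0 with h | h | h
      · exact absurd hq (h2 q h)
      · exfalso; rw [h] at hqn; have : (0:ℚ) ≤ n := Nat.cast_nonneg n; linarith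
      · by_contra hc
        push_neg at hc
        exact h3 q h hc hq
    by_cases hq1' : q = 1
    · have : (n:ℚ) < 1 := hq1' ▸ hqn
      have : n = 0 := by exact_mod_cast Nat.lt_one_iff.mp (by exact_mod_cast this)
      exact ⟨1, by simpa using hq1'⟩
    have hgt1 : 1 < q := lt_of_le_of_ne hq1 (Ne.symm hq1')
    have hmem : q - 1 ∈ NatA := h4 (q-1) (by linarith) (by simpa using hq)
    obtain ⟨m, hm⟩ := ih (q-1) hmem (by have := hle; push_cast at this; linarith)
    exact ⟨m+1, by push_cast; linarith⟩

theorem bslra_noncompact :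
    (¬ ∃ (a : ℚ) (NatA P : Set ℚ),
      (0 : ℚ) ∈ NatA ∧
      (∀ q : ℚ, q ∈ NatA → q + 1 ∈ NatA) ∧
      (∀ q : ℚ, q < 0 → q ∉ NatA) ∧
      (∀ q : ℚ, 0 < q → q < 1 → q ∉ NatA) ∧
      (∀ q : ℚ, 0 < q → q + 1 ∈ NatA → q ∈ NatA) ∧
      a ∈ NatA ∧
      (0 : ℚ) ∈ P ∧
      (∀ q : ℚ, q ∈ P → q + 1 ∈ P) ∧
      a ∉ P) ∧
    (∀ N : ℕ, ∃ (a : ℚ) (NatA P : Set ℚ),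
      (0 : ℚ) ∈ NatA ∧
      (∀ q : ℚ, q ∈ NatA → q + 1 ∈ NatA) ∧
      (∀ q : ℚ, q < 0 → q ∉ NatA) ∧
      (∀ q : ℚ, 0 < q → q < 1 → q ∉ NatA) ∧
      (∀ q : ℚ, 0 < q → q + 1 ∈ NatA → q ∈ NatA) ∧
      a ∈ NatA ∧
      (0 : ℚ) ∈ P ∧
      (∀ k : ℕ, k < N → ((k : ℚ) ∈ P → ((k : ℚ) + 1) ∈ P)) ∧
      a ∉ P) := by
  constructor
  · rintro ⟨a, NatA, P, h0, h1, h2, h3, h4, ha, hP0, hPs, haP⟩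
    have ha0 : 0 ≤ a := le_of_not_gt fun h => h2 a h ha
    obtain ⟨m, hm⟩ := natA_is_nat NatA h0 h2 h3 h4 (⌈a⌉.toNat) a ha
      (by
        have h1' : a ≤ (⌈a⌉ : ℚ) := Int.le_ceil a
        have h2' : (0:ℤ) ≤ ⌈a⌉ := Int.ceil_nonneg ha0
        have h3' : ((⌈a⌉.toNat : ℕ) : ℚ) = ((⌈a⌉ : ℤ) : ℚ) := by
          exact_mod_cast Int.toNat_of_nonneg h2'
        rw [h3']; exact h1')
    have : ∀ k : ℕ, (k : ℚ) ∈ P := by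
      intro k
      induction k with
      | zero => simpa using hP0
      | succ k ih => push_cast; exact hPs _ ih
    exact haP (hm ▸ this m)
  · intro N
    refine ⟨(N:ℚ)+1, Set.range (Nat.cast : ℕ → ℚ), {q | ∃ m : ℕ, m ≤ N ∧ q = m},
      ⟨0, by simp⟩, ?_, ?_, ?_, ?_, ⟨N+1, by push_cast; ring⟩, ⟨0, by simp⟩, ?_, ?_⟩
    · rintro q ⟨m, rfl⟩; exact ⟨m+1, by push_cast; ring⟩
    · rintro q hq ⟨m, rfl⟩; exact absurd hq (not_lt.mpr (by positivity))
    · rintro q h01 h1 ⟨m, rfl⟩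
      rcases m with _ | m
      · simp at h01
      · have : (1:ℚ) ≤ m+1 := by push_cast; linarith [Nat.cast_nonneg (α := ℚ) m]
        push_cast at h1; linarith
    · rintro q hq ⟨m, hm⟩
      rcases m with _ | m
      · exfalso; push_cast at hm; linarith
      · exact ⟨m, by push_cast at hm ⊢; linarith⟩
    · rintro k hk ⟨m, hm, hq⟩
      have hkm : k = m := by exact_mod_cast hq
      exact ⟨m+1, by omega, by push_cast at hq ⊢; linarith⟩
    · rintro ⟨m, hm, heq⟩
      have : m = N+1 := by exact_mod_cast heq.symm
      omega
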